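/- Let B be a codimension 2 CM graded quotient of R with Hilbert-Burch resolution 0 → F_2 → F_1 → R → B → 0 where rank F_1 = μ and rank F_2 = μ - 1. Then the normal module N_B = Hom_R(I_B, B) fits in an exact sequence 0 → R → ⊕_i I_B(n_{1,i}) → ⊕_j I_B(n_{2,j}) → N_B → 0, obtained by applying Hom_R(-, I_B) to the resolution and using Ext¹_R(I_B, I_B) ≅ N_B. -/

import Mathlib

set_option maxHeartbeats 1000000
set_option synthInstance.maxHeartbeats 200000


open MvPolynomial

/-- The codimension (height) of an ideal. -/
noncomputable def idealCodim {R : Type*} [CommRing R] (I : Ideal R) : ℕ∞ :=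
  ⨅ (P : PrimeSpectrum R) (_ : P.asIdeal ∈ I.minimalPrimes), Order.height P

lemma aux19_codim_le {A : Type*} [CommRing A] {I : Ideal A} {Q : Ideal A}
    (hQ : Q ∈ I.minimalPrimes) :
    idealCodim I ≤ Order.height (⟨Q, hQ.1.1⟩ : PrimeSpectrum A) := by
  exact iInf_le_of_le ⟨Q, hQ.1.1⟩ (iInf_le _ hQ)

lemma aux19_ne_bot {A : Type*} [CommRing A] [IsDomain A] {I : Ideal A}
    (h : idealCodim I = 2) : I ≠ ⊥ := by
  rintro rfl
  have hmem : (⊥ : Ideal A) ∈ (⊥ : Ideal A).minimalPrimes :=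
    ⟨⟨Ideal.bot_prime, le_rfl⟩, fun y _ _ => bot_le⟩
  have hle := aux19_codim_le hmem
  have hbot : (⟨⊥, Ideal.bot_prime⟩ : PrimeSpectrum A) = ⊥ := rfl
  rw [hbot, Order.height_bot, h] at hle
  exact absurd hle (by decide)

lemma aux19_unit {A : Type*} [CommRing A] [IsDomain A] [UniqueFactorizationMonoid A]
    {I : Ideal A} (h : idealCodim I = 2) (q : A) (hq : ∀ a ∈ I, q ∣ a) : IsUnit q := by
  by_contra hqu
  obtain ⟨a0, ha0I, ha0⟩ := Submodule.exists_mem_ne_zero_of_ne_bot (aux19_ne_bot h)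
  have hq0 : q ≠ 0 := by
    rintro rfl
    exact ha0 (zero_dvd_iff.mp (hq a0 ha0I))
  obtain ⟨p, hpfac⟩ := UniqueFactorizationMonoid.exists_mem_factors hq0 hqu
  have hp : Prime p := UniqueFactorizationMonoid.prime_of_factor p hpfac
  have hpq : p ∣ q := UniqueFactorizationMonoid.dvd_of_mem_factors hpfac
  have hIp : I ≤ Ideal.span {p} := fun a ha =>
    Ideal.mem_span_singleton.2 (hpq.trans (hq a ha))
  haveI : (Ideal.span {p}).IsPrime := (Ideal.span_singleton_prime hp.ne_zero).2 hp
  obtain ⟨Q, hQmin, hQle⟩ := Ideal.exists_minimalPrimes_le hIp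
  haveI hQp : Q.IsPrime := hQmin.1.1
  have h2 : (2 : ℕ∞) ≤ Order.height (⟨Q, hQp⟩ : PrimeSpectrum A) := by
    have := aux19_codim_le hQmin; rwa [h] at this
  obtain ⟨c, hlast, hlen⟩ := Order.exists_series_of_le_height _ (n := 2) h2
  have hmono := c.strictMono
  set P0 := c ⟨0, by omega⟩ with hP0def
  set P1 := c ⟨1, by omega⟩ with hP1def
  have hlast' : c ⟨c.length, by omega⟩ = ⟨Q, hQp⟩ := hlast
  have h01 : P0 < P1 := hmono (by simp [Fin.lt_def])
  have h1Q : P1 < (⟨Q, hQp⟩ : PrimeSpectrum A) := by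
    rw [← hlast']
    exact hmono (by simp [Fin.lt_def, hlen])
  have hP1span : P1.asIdeal ≤ Ideal.span {p} := le_trans (le_of_lt h1Q) hQle
  have hpP1 : p ∉ P1.asIdeal := by
    intro hmem
    have hsp : Ideal.span {p} ≤ P1.asIdeal := (Ideal.span_singleton_le_iff_mem _).2 hmem
    have h1Q' : P1.asIdeal < Q := h1Q
    exact absurd (lt_of_lt_of_le h1Q' (le_trans hQle hsp)) (lt_irrefl _)
  have hP1bot : P1.asIdeal = ⊥ := by
    by_contra hne
    obtain ⟨b, hbP1, hb0⟩ := Submodule.exists_mem_ne_zero_of_ne_bot hne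
    have hbu : ¬IsUnit b := fun hu =>
      P1.isPrime.ne_top (Ideal.eq_top_of_isUnit_mem _ hbP1 hu)
    have hprodmem : (UniqueFactorizationMonoid.factors b).prod ∈ P1.asIdeal := by
      obtain ⟨u, hu⟩ := (UniqueFactorizationMonoid.factors_prod hb0).symm
      rw [← hu]
      exact Ideal.mul_mem_right _ _ hbP1
    obtain ⟨p', hp'fac, hp'P1⟩ :=
      (P1.isPrime.multiset_prod_mem_iff_exists_mem _).1 hprodmem
    have hp' : Prime p' := UniqueFactorizationMonoid.prime_of_factor p' hp'fac
    have hpp' : p ∣ p' := Ideal.mem_span_singleton.1 (hP1span hp'P1)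
    obtain ⟨e, he⟩ := hpp'
    have heu : IsUnit e := (hp'.irreducible.isUnit_or_isUnit he).resolve_left hp.not_unit
    obtain ⟨eu, rfl⟩ := heu
    apply hpP1
    have : p = p' * ↑eu⁻¹ := by
      rw [he]; rw [mul_assoc]; simp
    rw [this]
    exact Ideal.mul_mem_right _ _ hp'P1
  have : P0 < (⊥ : PrimeSpectrum A) := by
    have : P1 = (⊥ : PrimeSpectrum A) := PrimeSpectrum.ext hP1bot
    rwa [this] at h01
  exact absurd this (not_lt_bot)

open MvPolynomial

section
variable {k : Type*} [Field k] {n m : ℕ}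
  {I : Ideal (MvPolynomial (Fin (n + 1)) k)}
  {M2 : Matrix (Fin (m + 1)) (Fin m) (MvPolynomial (Fin (n + 1)) k)}
  {v1 : Fin (m + 1) → MvPolynomial (Fin (n + 1)) k}
  {d1 : (Fin (m + 1) → MvPolynomial (Fin (n + 1)) k) →ₗ[MvPolynomial (Fin (n + 1)) k]
      MvPolynomial (Fin (n + 1)) k}

lemma aux19_d1_apply (hd1 : d1 = ∑ i, (LinearMap.proj i).smulRight (v1 i))
    (w : Fin (m + 1) → MvPolynomial (Fin (n + 1)) k) :
    d1 w = ∑ i, w i * v1 i := by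
  rw [hd1]
  simp [LinearMap.sum_apply, LinearMap.smulRight_apply, LinearMap.proj_apply, smul_eq_mul]

lemma aux19_d1_single (hd1 : d1 = ∑ i, (LinearMap.proj i).smulRight (v1 i))
    (i : Fin (m + 1)) : d1 (Pi.single i 1) = v1 i := by
  rw [aux19_d1_apply hd1]
  rw [Finset.sum_eq_single i]
  · simp
  · intro b _ hb; simp [Pi.single_apply, hb]
  · simp

lemma aux19_dot_mulVec (x : Fin (m + 1) → MvPolynomial (Fin (n + 1)) k)
    (hx : ∀ j, ∑ i, M2 i j * x i = 0) (u : Fin m → MvPolynomial (Fin (n + 1)) k) :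
    ∑ i, x i * M2.mulVec u i = 0 := by
  have : ∀ i, x i * M2.mulVec u i = ∑ j, x i * (M2 i j * u j) := by
    intro i
    rw [Matrix.mulVec, dotProduct, Finset.mul_sum]
  rw [Finset.sum_congr rfl fun i _ => this i, Finset.sum_comm]
  apply Finset.sum_eq_zero
  intro j _
  have : ∑ i, x i * (M2 i j * u j) = (∑ i, M2 i j * x i) * u j := by
    rw [Finset.sum_mul]
    exact Finset.sum_congr rfl fun i _ => by ring
  rw [this, hx j, zero_mul]

lemma aux19_dot_ker (hex : Function.Exact M2.mulVecLin d1)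
    (x : Fin (m + 1) → MvPolynomial (Fin (n + 1)) k)
    (hx : ∀ j, ∑ i, M2 i j * x i = 0)
    (w : Fin (m + 1) → MvPolynomial (Fin (n + 1)) k) (hw : d1 w = 0) :
    ∑ i, x i * w i = 0 := by
  obtain ⟨u, hu⟩ := (hex w).mp hw
  rw [← hu, Matrix.mulVecLin_apply]
  exact aux19_dot_mulVec x hx u

lemma aux19_cross (hex : Function.Exact M2.mulVecLin d1)
    (x : Fin (m + 1) → MvPolynomial (Fin (n + 1)) k)
    (hx : ∀ j, ∑ i, M2 i j * x i = 0)
    (w w' : Fin (m + 1) → MvPolynomial (Fin (n + 1)) k) :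
    d1 w' * ∑ i, x i * w i = d1 w * ∑ i, x i * w' i := by
  have h0 : d1 (d1 w' • w - d1 w • w') = 0 := by
    rw [map_sub, map_smul, map_smul, smul_eq_mul, smul_eq_mul, mul_comm, sub_self]
  have := aux19_dot_ker hex x hx _ h0
  have hexp : ∑ i, x i * (d1 w' • w - d1 w • w') i
      = d1 w' * (∑ i, x i * w i) - d1 w * (∑ i, x i * w' i) := by
    rw [Finset.mul_sum, Finset.mul_sum, ← Finset.sum_sub_distrib]
    exact Finset.sum_congr rfl fun i _ => by
      simp [Pi.sub_apply, Pi.smul_apply, smul_eq_mul]; ring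
  rw [hexp] at this
  exact sub_eq_zero.mp this

lemma aux19_dot_single (x : Fin (m + 1) → MvPolynomial (Fin (n + 1)) k) (i : Fin (m + 1)) :
    ∑ i', x i' * (Pi.single i 1 : Fin (m + 1) → MvPolynomial (Fin (n + 1)) k) i' = x i := by
  rw [Finset.sum_eq_single i]
  · simp
  · intro b _ hb; simp [Pi.single_apply, hb]
  · simp

lemma aux19_key (hd1 : d1 = ∑ i, (LinearMap.proj i).smulRight (v1 i))
    (hex : Function.Exact M2.mulVecLin d1)
    (hrange : LinearMap.range d1 = I.restrictScalars _)
    (hcodim : idealCodim I = 2)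
    (x : Fin (m + 1) → MvPolynomial (Fin (n + 1)) k)
    (hx : ∀ j, ∑ i, M2 i j * x i = 0) :
    ∃ r, ∀ i, x i = r * v1 i := by
  classical
  have hi0 : ∃ i, v1 i ≠ 0 := by
    by_contra hall
    push_neg at hall
    apply aux19_ne_bot hcodim
    rw [eq_bot_iff]
    intro a ha
    have har : a ∈ LinearMap.range d1 := by rw [hrange]; exact ha
    obtain ⟨w, hw⟩ := har
    have ha0 : a = ∑ i, w i * v1 i := by rw [← hw, aux19_d1_apply hd1]
    simp only [hall, mul_zero, Finset.sum_const_zero] at ha0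
    simp [ha0]
  obtain ⟨i0, hi0⟩ := hi0
  letI := UniqueFactorizationMonoid.normalizationMonoid (α := MvPolynomial (Fin (n + 1)) k)
  letI := UniqueFactorizationMonoid.toNormalizedGCDMonoid (MvPolynomial (Fin (n + 1)) k)
  set a0 := v1 i0 with ha0def
  set c0 := x i0 with hc0def
  set g := gcd a0 c0 with hgdef
  have hg0 : g ≠ 0 := fun h => hi0 ((gcd_eq_zero_iff a0 c0).1 h).1
  obtain ⟨q, hq⟩ := gcd_dvd_left a0 c0
  obtain ⟨p, hp⟩ := gcd_dvd_right a0 c0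
  have hrel : IsRelPrime q p := by
    intro d hdq hdp
    have h1 : g * d ∣ a0 := by rw [hq]; exact mul_dvd_mul_left g hdq
    have h2 : g * d ∣ c0 := by rw [hp]; exact mul_dvd_mul_left g hdp
    obtain ⟨e, he⟩ := dvd_gcd h1 h2
    have h1e : (1 : MvPolynomial (Fin (n + 1)) k) = d * e := by
      apply mul_left_cancel₀ hg0
      rw [mul_one, ← mul_assoc, ← he]
    exact IsUnit.of_mul_eq_one e h1e.symm
  have hqdvd : ∀ a ∈ I, q ∣ a := by
    intro a ha
    have har : a ∈ LinearMap.range d1 := by rw [hrange]; exact ha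
    obtain ⟨w, hw⟩ := har
    have hcr := aux19_cross hex x hx w (Pi.single i0 1)
    rw [hw, aux19_d1_single hd1 i0, aux19_dot_single x i0] at hcr
    set S := ∑ i, x i * w i with hSdef
    have h3 : g * (a * p) = g * (q * S) := by
      calc g * (a * p) = a * (g * p) := by ring
        _ = a * c0 := by rw [← hp]
        _ = a0 * S := hcr.symm
        _ = g * q * S := by rw [hq]
        _ = g * (q * S) := by ring
    exact hrel.dvd_of_dvd_mul_right ⟨S, mul_left_cancel₀ hg0 h3⟩
  obtain ⟨q', hq'⟩ := (aux19_unit hcodim q hqdvd).exists_right_inv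
  refine ⟨p * q', fun i => ?_⟩
  have hcr := aux19_cross hex x hx (Pi.single i0 1) (Pi.single i 1)
  rw [aux19_d1_single hd1 i, aux19_d1_single hd1 i0, aux19_dot_single x i0,
    aux19_dot_single x i] at hcr
  have h5 : g * (q * x i) = g * (p * v1 i) := by
    calc g * (q * x i) = g * q * x i := by ring
      _ = a0 * x i := by rw [← hq]
      _ = v1 i * c0 := hcr.symm
      _ = v1 i * (g * p) := by rw [← hp]
      _ = g * (p * v1 i) := by ring
  have h6 : q * x i = p * v1 i := mul_left_cancel₀ hg0 h5
  calc x i = q * q' * x i := by rw [hq', one_mul]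
    _ = q' * (q * x i) := by ring
    _ = q' * (p * v1 i) := by rw [h6]
    _ = p * q' * v1 i := by ring


lemma aux19_v1_mem (hd1 : d1 = ∑ i, (LinearMap.proj i).smulRight (v1 i))
    (hrange : LinearMap.range d1 = I.restrictScalars _) (i : Fin (m + 1)) : v1 i ∈ I := by
  have : v1 i ∈ LinearMap.range d1 := ⟨Pi.single i 1, aux19_d1_single hd1 i⟩
  rw [hrange] at this
  exact this

lemma aux19_d1_mem (hrange : LinearMap.range d1 = I.restrictScalars _)
    (w : Fin (m + 1) → MvPolynomial (Fin (n + 1)) k) : d1 w ∈ I := by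
  have : d1 w ∈ LinearMap.range d1 := LinearMap.mem_range_self _ w
  rw [hrange] at this
  exact this

lemma aux19_colv1 (hd1 : d1 = ∑ i, (LinearMap.proj i).smulRight (v1 i))
    (hex : Function.Exact M2.mulVecLin d1) (j : Fin m) :
    ∑ i, M2 i j * v1 i = 0 := by
  have h0 : d1 (M2.mulVecLin (Pi.single j 1)) = 0 := hex.apply_apply_eq_zero _
  rw [aux19_d1_apply hd1] at h0
  simpa [Matrix.mulVecLin_apply, Matrix.mulVec_single] using h0

lemma aux19_wd (hd1 : d1 = ∑ i, (LinearMap.proj i).smulRight (v1 i))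
    (hex : Function.Exact M2.mulVecLin d1)
    (hrange : LinearMap.range d1 = I.restrictScalars _)
    (hcodim : idealCodim I = 2)
    (z z' w : Fin (m + 1) → MvPolynomial (Fin (n + 1)) k)
    (h : ∀ j, ∑ i, M2 i j * z i = ∑ i, M2 i j * z' i) :
    (∑ i, z i * w i) - (∑ i, z' i * w i) ∈ I := by
  obtain ⟨r, hr⟩ := aux19_key hd1 hex hrange hcodim (z - z') (fun j => by
    simp only [Pi.sub_apply, mul_sub]
    rw [Finset.sum_sub_distrib, h j, sub_self])
  have heq : (∑ i, z i * w i) - (∑ i, z' i * w i) = r * ∑ i, w i * v1 i := by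
    rw [← Finset.sum_sub_distrib, Finset.mul_sum]
    refine Finset.sum_congr rfl fun i _ => ?_
    have h2 := hr i
    simp only [Pi.sub_apply] at h2
    calc z i * w i - z' i * w i = (z i - z' i) * w i := by ring
      _ = r * v1 i * w i := by rw [h2]
      _ = r * (w i * v1 i) := by ring
  rw [heq, ← aux19_d1_apply hd1]
  exact I.mul_mem_left r (aux19_d1_mem hrange w)

lemma aux19_ext_single (hd1 : d1 = ∑ i, (LinearMap.proj i).smulRight (v1 i))
    (hinj : Function.Injective M2.mulVecLin)
    (hex : Function.Exact M2.mulVecLin d1)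
    (hrange : LinearMap.range d1 = I.restrictScalars _)
    (a : MvPolynomial (Fin (n + 1)) k) (ha : a ∈ I) (j0 : Fin m) :
    ∃ z : Fin (m + 1) → MvPolynomial (Fin (n + 1)) k,
      ∀ j, ∑ i, M2 i j * z i = if j = j0 then a else 0 := by
  classical
  have har : a ∈ LinearMap.range d1 := by rw [hrange]; exact ha
  obtain ⟨w0, hw0⟩ := har
  have hker : ∀ i, d1 (a • (Pi.single i 1 : Fin (m + 1) → MvPolynomial (Fin (n + 1)) k) - v1 i • w0) = 0 := by
    intro i
    rw [map_sub, map_smul, map_smul, aux19_d1_single hd1 i, hw0, smul_eq_mul, smul_eq_mul,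
      mul_comm, sub_self]
  choose s hs using fun i => (hex _).mp (hker i)
  have hLu : ∀ u : Fin m → MvPolynomial (Fin (n + 1)) k,
      (∑ i, M2.mulVecLin u i • s i) = a • u := by
    intro u
    apply hinj
    rw [map_sum, map_smul]
    have hterm : ∀ i, M2.mulVecLin (M2.mulVecLin u i • s i)
        = M2.mulVecLin u i • (a • (Pi.single i 1 : Fin (m + 1) → MvPolynomial (Fin (n + 1)) k) - v1 i • w0) := by
      intro i; rw [map_smul, hs i]
    rw [Finset.sum_congr rfl fun i _ => hterm i]
    funext i'
    rw [Finset.sum_apply]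
    have hz : ∑ i, M2.mulVecLin u i * v1 i = 0 := by
      have h0 : d1 (M2.mulVecLin u) = 0 := hex.apply_apply_eq_zero u
      rwa [aux19_d1_apply hd1] at h0
    have hterm2 : ∀ i, (M2.mulVecLin u i • (a • (Pi.single i 1 : Fin (m + 1) → MvPolynomial (Fin (n + 1)) k) - v1 i • w0)) i'
        = M2.mulVecLin u i * a * (Pi.single i 1 : Fin (m + 1) → MvPolynomial (Fin (n + 1)) k) i'
          - M2.mulVecLin u i * v1 i * w0 i' := by
      intro i
      simp only [Pi.smul_apply, Pi.sub_apply, smul_eq_mul, Pi.single_apply]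
      ring
    rw [Finset.sum_congr rfl fun i _ => hterm2 i, Finset.sum_sub_distrib]
    have hfst : ∑ i, M2.mulVecLin u i * a
        * (Pi.single i 1 : Fin (m + 1) → MvPolynomial (Fin (n + 1)) k) i'
        = M2.mulVecLin u i' * a := by
      rw [Finset.sum_eq_single i']
      · simp
      · intro b _ hb; simp [Pi.single_apply, Ne.symm hb]
      · simp
    have hsnd : ∑ i, M2.mulVecLin u i * v1 i * w0 i'
        = (∑ i, M2.mulVecLin u i * v1 i) * w0 i' := by
      rw [Finset.sum_mul]
    rw [hfst, hsnd, hz, zero_mul, sub_zero, Pi.smul_apply, smul_eq_mul]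
    ring
  refine ⟨fun i => s i j0, fun j => ?_⟩
  have hcomp := congrFun (hLu (Pi.single j 1)) j0
  rw [Finset.sum_apply] at hcomp
  have hl : ∀ i, (M2.mulVecLin (Pi.single j 1) i • s i) j0 = M2 i j * s i j0 := by
    intro i
    simp [Matrix.mulVecLin_apply, Matrix.mulVec_single]
  rw [Finset.sum_congr rfl fun i _ => hl i] at hcomp
  rw [hcomp]
  simp only [Pi.smul_apply, Pi.single_apply, smul_eq_mul]
  by_cases hjj : j = j0
  · subst hjj; simp
  · simp [hjj, Ne.symm hjj]

lemma aux19_ext (hd1 : d1 = ∑ i, (LinearMap.proj i).smulRight (v1 i))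
    (hinj : Function.Injective M2.mulVecLin)
    (hex : Function.Exact M2.mulVecLin d1)
    (hrange : LinearMap.range d1 = I.restrictScalars _)
    (y : Fin m → MvPolynomial (Fin (n + 1)) k) (hy : ∀ j, y j ∈ I) :
    ∃ z : Fin (m + 1) → MvPolynomial (Fin (n + 1)) k,
      ∀ j, ∑ i, M2 i j * z i = y j := by
  classical
  choose F hF using fun j0 => aux19_ext_single hd1 hinj hex hrange (y j0) (hy j0) j0
  refine ⟨∑ j0, F j0, fun j => ?_⟩
  have hterm : ∀ i, M2 i j * (∑ j0, F j0) i = ∑ j0, M2 i j * F j0 i := by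
    intro i; rw [Finset.sum_apply, Finset.mul_sum]
  rw [Finset.sum_congr rfl fun i _ => hterm i, Finset.sum_comm,
    Finset.sum_congr rfl fun j0 _ => hF j0 j]
  simp


lemma aux19_dot_mulVec' (z : Fin (m + 1) → MvPolynomial (Fin (n + 1)) k)
    (u : Fin m → MvPolynomial (Fin (n + 1)) k) :
    ∑ i, z i * M2.mulVec u i = ∑ j, (∑ i, M2 i j * z i) * u j := by
  have h1 : ∀ i, z i * M2.mulVec u i = ∑ j, z i * (M2 i j * u j) := by
    intro i
    rw [Matrix.mulVec, dotProduct, Finset.mul_sum]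
  rw [Finset.sum_congr rfl fun i _ => h1 i, Finset.sum_comm]
  refine Finset.sum_congr rfl fun j _ => ?_
  rw [Finset.sum_mul]
  exact Finset.sum_congr rfl fun i _ => by ring

lemma aux19_exists_ne (hd1 : d1 = ∑ i, (LinearMap.proj i).smulRight (v1 i))
    (hrange : LinearMap.range d1 = I.restrictScalars _)
    (hcodim : idealCodim I = 2) : ∃ i, v1 i ≠ 0 := by
  by_contra hall
  push_neg at hall
  apply aux19_ne_bot hcodim
  rw [eq_bot_iff]
  intro a ha
  have har : a ∈ LinearMap.range d1 := by rw [hrange]; exact ha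
  obtain ⟨w, hw⟩ := har
  have ha0 : a = ∑ i, w i * v1 i := by rw [← hw, aux19_d1_apply hd1]
  simp only [hall, mul_zero, Finset.sum_const_zero] at ha0
  simp [ha0]

lemma aux19_wdw (hex : Function.Exact M2.mulVecLin d1)
    (z : Fin (m + 1) → MvPolynomial (Fin (n + 1)) k)
    (hz : ∀ j, ∑ i, M2 i j * z i ∈ I)
    (w w' : Fin (m + 1) → MvPolynomial (Fin (n + 1)) k) (hww : d1 w = d1 w') :
    (∑ i, z i * w i) - (∑ i, z i * w' i) ∈ I := by
  have h0 : d1 (w - w') = 0 := by rw [map_sub, hww, sub_self]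
  obtain ⟨u, hu⟩ := (hex _).mp h0
  have heq : (∑ i, z i * w i) - (∑ i, z i * w' i) = ∑ j, (∑ i, M2 i j * z i) * u j := by
    rw [← aux19_dot_mulVec' z u, ← Matrix.mulVecLin_apply, hu, ← Finset.sum_sub_distrib]
    exact Finset.sum_congr rfl fun i _ => by simp [Pi.sub_apply]; ring
  rw [heq]
  exact Submodule.sum_mem _ fun j _ => I.mul_mem_right (u j) (hz j)


end

/-- let `B = R/I_B` be a codimension 2 Cohen–Macaulay graded
quotient with Hilbert–Burch resolution `0 → F₂ → F₁ → R → B → 0`,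
`rank F₁ = μ = m + 1`, `rank F₂ = m`.  Then the normal module
`N_B = Hom_R(I_B, B)` fits in an exact sequence
`0 → R → ⊕ᵢ I_B(n₁ᵢ) → ⊕ⱼ I_B(n₂ⱼ) → N_B → 0` (twists suppressed), obtained
by applying `Hom_R(-, I_B)` to the resolution and using
`Ext¹_R(I_B, I_B) ≅ N_B`. -/
theorem stmt19 (k : Type*) [Field k] (n m : ℕ)
    (I : Ideal (MvPolynomial (Fin (n + 1)) k))
    (M2 : Matrix (Fin (m + 1)) (Fin m) (MvPolynomial (Fin (n + 1)) k))
    (v1 : Fin (m + 1) → MvPolynomial (Fin (n + 1)) k)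
    (d1 : (Fin (m + 1) → MvPolynomial (Fin (n + 1)) k) →ₗ[MvPolynomial (Fin (n + 1)) k]
        MvPolynomial (Fin (n + 1)) k)
    (hd1 : d1 = ∑ i, (LinearMap.proj i).smulRight (v1 i))
    (hinj : Function.Injective M2.mulVecLin)
    (hex : Function.Exact M2.mulVecLin d1)
    (hrange : LinearMap.range d1 = I.restrictScalars _)
    (hcodim : idealCodim I = 2) :
    ∃ (α : MvPolynomial (Fin (n + 1)) k →ₗ[MvPolynomial (Fin (n + 1)) k]
          (Fin (m + 1) → ↥I))
      (β : (Fin (m + 1) → ↥I) →ₗ[MvPolynomial (Fin (n + 1)) k] (Fin m → ↥I))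
      (γ : (Fin m → ↥I) →ₗ[MvPolynomial (Fin (n + 1)) k]
          (↥I →ₗ[MvPolynomial (Fin (n + 1)) k]
            (MvPolynomial (Fin (n + 1)) k ⧸ I))),
      Function.Injective α ∧ Function.Exact α β ∧ Function.Exact β γ ∧
        Function.Surjective γ := by
  classical
  have hvI : ∀ i, v1 i ∈ I := aux19_v1_mem hd1 hrange
  have hzero : ∀ j, ∑ i, M2 i j * v1 i = 0 := aux19_colv1 hd1 hex
  obtain ⟨i0, hi0⟩ := aux19_exists_ne hd1 hrange hcodim
  have hmksmul : ∀ r s : MvPolynomial (Fin (n + 1)) k,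
      Ideal.Quotient.mk I (r * s) = r • Ideal.Quotient.mk I s := by
    intro r s
    rfl
  -- the map α
  let A : MvPolynomial (Fin (n + 1)) k →ₗ[MvPolynomial (Fin (n + 1)) k]
      (Fin (m + 1) → ↥I) :=
    { toFun := fun r i => ⟨r * v1 i, I.mul_mem_left r (hvI i)⟩
      map_add' := fun r r' => by funext i; exact Subtype.ext (by simp [add_mul])
      map_smul' := fun c r => by funext i; exact Subtype.ext (by simp [mul_assoc]) }
  -- the map β
  let B : (Fin (m + 1) → ↥I) →ₗ[MvPolynomial (Fin (n + 1)) k] (Fin m → ↥I) :=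
    { toFun := fun x j => ⟨∑ i, M2 i j * (x i : MvPolynomial (Fin (n + 1)) k),
        Submodule.sum_mem _ fun i _ => I.mul_mem_left _ (x i).2⟩
      map_add' := fun x x' => by
        funext j
        exact Subtype.ext (by simp [mul_add, Finset.sum_add_distrib])
      map_smul' := fun c x => by
        funext j
        refine Subtype.ext ?_
        simp only [Pi.smul_apply, Submodule.coe_smul, smul_eq_mul, SetLike.val_smul,
          RingHom.id_apply]
        rw [Finset.mul_sum]
        exact Finset.sum_congr rfl fun i _ => by ring }
  -- choices
  have hdmem : ∀ w, d1 w ∈ I := aux19_d1_mem hrange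
  have hsurj : ∀ a : ↥I, ∃ w, d1 w = (a : MvPolynomial (Fin (n + 1)) k) := by
    intro a
    have : (a : MvPolynomial (Fin (n + 1)) k) ∈ LinearMap.range d1 := by
      rw [hrange]; exact a.2
    exact this
  choose wc hwc using hsurj
  have hz : ∀ y : Fin m → ↥I, ∃ z : Fin (m + 1) → MvPolynomial (Fin (n + 1)) k,
      ∀ j, ∑ i, M2 i j * z i = ((y j : MvPolynomial (Fin (n + 1)) k)) :=
    fun y => aux19_ext hd1 hinj hex hrange _ (fun j => (y j).2)
  choose zc hzc using hz
  -- value of gamma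
  set gval : (Fin m → ↥I) → ↥I → MvPolynomial (Fin (n + 1)) k ⧸ I :=
    fun y a => Ideal.Quotient.mk I (∑ i, zc y i * wc a i) with hgval
  -- independence of the choice of z
  have hZind : ∀ (y : Fin m → ↥I) (z : Fin (m + 1) → MvPolynomial (Fin (n + 1)) k),
      (∀ j, ∑ i, M2 i j * z i = (y j : MvPolynomial (Fin (n + 1)) k)) →
      ∀ w : Fin (m + 1) → MvPolynomial (Fin (n + 1)) k,
      Ideal.Quotient.mk I (∑ i, z i * w i) = Ideal.Quotient.mk I (∑ i, zc y i * w i) := by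
    intro y z hzy w
    rw [Ideal.Quotient.mk_eq_mk_iff_sub_mem]
    exact aux19_wd hd1 hex hrange hcodim z (zc y) w
      (fun j => by rw [hzy j, hzc y j])
  -- independence of the choice of w
  have hWind : ∀ (y : Fin m → ↥I) (w w' : Fin (m + 1) → MvPolynomial (Fin (n + 1)) k),
      d1 w = d1 w' →
      Ideal.Quotient.mk I (∑ i, zc y i * w i) = Ideal.Quotient.mk I (∑ i, zc y i * w' i) := by
    intro y w w' hww
    rw [Ideal.Quotient.mk_eq_mk_iff_sub_mem]
    exact aux19_wdw hex (zc y) (fun j => by rw [hzc y j]; exact (y j).2) w w' hww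
  -- gval evaluated with an explicit preimage
  have hgev : ∀ (y : Fin m → ↥I) (a : ↥I) (w : Fin (m + 1) → MvPolynomial (Fin (n + 1)) k),
      d1 w = (a : MvPolynomial (Fin (n + 1)) k) →
      gval y a = Ideal.Quotient.mk I (∑ i, zc y i * w i) := by
    intro y a w hw
    exact (hWind y (wc a) w (by rw [hwc a, hw])).symm ▸ rfl
  -- additivity of gval in the I-variable
  have hphi_add : ∀ y (a b : ↥I), gval y (a + b) = gval y a + gval y b := by
    intro y a b
    have h1 : gval y (a + b) = Ideal.Quotient.mk I (∑ i, zc y i * (wc a + wc b) i) := by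
      apply hgev
      rw [map_add, hwc a, hwc b, Submodule.coe_add]
    rw [h1]
    have h2 : (∑ i, zc y i * (wc a + wc b) i)
        = (∑ i, zc y i * wc a i) + (∑ i, zc y i * wc b i) := by
      rw [← Finset.sum_add_distrib]
      exact Finset.sum_congr rfl fun i _ => by simp only [Pi.add_apply]; ring
    rw [h2, map_add (Ideal.Quotient.mk I)]
  have hphi_smul : ∀ (c : MvPolynomial (Fin (n + 1)) k) y (a : ↥I),
      gval y (c • a) = c • gval y a := by
    intro c y a
    have h1 : gval y (c • a) = Ideal.Quotient.mk I (∑ i, zc y i * (c • wc a) i) := by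
      apply hgev
      rw [map_smul, hwc a, SetLike.val_smul]
    rw [h1]
    have h2 : (∑ i, zc y i * (c • wc a) i) = c * (∑ i, zc y i * wc a i) := by
      rw [Finset.mul_sum]
      exact Finset.sum_congr rfl fun i _ => by
        simp only [Pi.smul_apply, smul_eq_mul]; ring
    rw [h2, hmksmul]
  let Phi : (Fin m → ↥I) → (↥I →ₗ[MvPolynomial (Fin (n + 1)) k]
      MvPolynomial (Fin (n + 1)) k ⧸ I) := fun y =>
    { toFun := gval y
      map_add' := hphi_add y
      map_smul' := fun c a => hphi_smul c y a }
  -- linearity of gval in the y-variable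
  have hG_add : ∀ y y', Phi (y + y') = Phi y + Phi y' := by
    intro y y'
    apply LinearMap.ext
    intro a
    show gval (y + y') a = gval y a + gval y' a
    have hcol : ∀ j, ∑ i, M2 i j * (zc y i + zc y' i)
        = (((y + y') j : MvPolynomial (Fin (n + 1)) k)) := by
      intro j
      simp only [mul_add]
      rw [Finset.sum_add_distrib, hzc y j, hzc y' j]
      rfl
    have h1 : gval (y + y') a
        = Ideal.Quotient.mk I (∑ i, (zc y i + zc y' i) * wc a i) :=
      (hZind (y + y') (fun i => zc y i + zc y' i) hcol (wc a)).symm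
    rw [h1]
    have h2 : (∑ i, (zc y i + zc y' i) * wc a i)
        = (∑ i, zc y i * wc a i) + (∑ i, zc y' i * wc a i) := by
      rw [← Finset.sum_add_distrib]
      exact Finset.sum_congr rfl fun i _ => by ring
    rw [h2, map_add (Ideal.Quotient.mk I)]
  have hG_smul : ∀ (c : MvPolynomial (Fin (n + 1)) k) y, Phi (c • y) = c • Phi y := by
    intro c y
    apply LinearMap.ext
    intro a
    show gval (c • y) a = c • gval y a
    have hcol : ∀ j, ∑ i, M2 i j * (c * zc y i)
        = (((c • y) j : MvPolynomial (Fin (n + 1)) k)) := by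
      intro j
      have : ∑ i, M2 i j * (c * zc y i) = c * ∑ i, M2 i j * zc y i := by
        rw [Finset.mul_sum]
        exact Finset.sum_congr rfl fun i _ => by ring
      rw [this, hzc y j]
      rfl
    have h1 : gval (c • y) a
        = Ideal.Quotient.mk I (∑ i, (c * zc y i) * wc a i) :=
      (hZind (c • y) (fun i => c * zc y i) hcol (wc a)).symm
    rw [h1]
    have h2 : (∑ i, (c * zc y i) * wc a i) = c * ∑ i, zc y i * wc a i := by
      rw [Finset.mul_sum]
      exact Finset.sum_congr rfl fun i _ => by ring
    rw [h2, hmksmul]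
  let G : (Fin m → ↥I) →ₗ[MvPolynomial (Fin (n + 1)) k]
      (↥I →ₗ[MvPolynomial (Fin (n + 1)) k] MvPolynomial (Fin (n + 1)) k ⧸ I) :=
    { toFun := Phi
      map_add' := hG_add
      map_smul' := hG_smul }
  refine ⟨A, B, G, ?_, ?_, ?_, ?_⟩
  · -- injectivity of A
    intro r r' h
    have h2 : r * v1 i0 = r' * v1 i0 :=
      congrArg (fun x : Fin (m + 1) → ↥I => ((x i0 : ↥I) : MvPolynomial (Fin (n + 1)) k)) h
    exact mul_right_cancel₀ hi0 h2
  · -- exactness at the first spot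
    intro x
    constructor
    · intro h
      have hx : ∀ j, ∑ i, M2 i j * ((x i : MvPolynomial (Fin (n + 1)) k)) = 0 := by
        intro j
        exact Subtype.ext_iff.mp (congrFun h j)
      obtain ⟨r, hr⟩ := aux19_key hd1 hex hrange hcodim
        (fun i => (x i : MvPolynomial (Fin (n + 1)) k)) hx
      refine ⟨r, ?_⟩
      funext i
      exact Subtype.ext (hr i).symm
    · rintro ⟨r, rfl⟩
      funext j
      refine Subtype.ext ?_
      show ∑ i, M2 i j * (r * v1 i) = (0 : MvPolynomial (Fin (n + 1)) k)
      have h4 : ∑ i, M2 i j * (r * v1 i) = r * ∑ i, M2 i j * v1 i := by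
        rw [Finset.mul_sum]
        exact Finset.sum_congr rfl fun i _ => by ring
      rw [h4, hzero j, mul_zero]
  · -- exactness at the second spot
    intro y
    constructor
    · intro h
      have hmem : ∀ i, zc y i ∈ I := by
        intro i
        have h1 : gval y ⟨v1 i, hvI i⟩ = Ideal.Quotient.mk I (zc y i) := by
          rw [hgev y ⟨v1 i, hvI i⟩ (Pi.single i 1) (aux19_d1_single hd1 i)]
          congr 1
          exact aux19_dot_single (zc y) i
        have h2 : gval y ⟨v1 i, hvI i⟩ = 0 := by
          have h3 := LinearMap.congr_fun h (⟨v1 i, hvI i⟩ : ↥I)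
          exact h3
        rw [h2] at h1
        exact Ideal.Quotient.eq_zero_iff_mem.mp h1.symm
      refine ⟨fun i => ⟨zc y i, hmem i⟩, ?_⟩
      funext j
      refine Subtype.ext ?_
      show ∑ i, M2 i j * zc y i = ((y j : MvPolynomial (Fin (n + 1)) k))
      exact hzc y j
    · rintro ⟨x, rfl⟩
      apply LinearMap.ext
      intro a
      show gval (B x) a = 0
      have h1 : gval (B x) a
          = Ideal.Quotient.mk I (∑ i, ((x i : MvPolynomial (Fin (n + 1)) k)) * wc a i) :=
        (hZind (B x) (fun i => (x i : MvPolynomial (Fin (n + 1)) k))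
          (fun j => rfl) (wc a)).symm
      rw [h1, Ideal.Quotient.eq_zero_iff_mem]
      exact Submodule.sum_mem _ fun i _ => I.mul_mem_right _ (x i).2
  · -- surjectivity
    intro φ
    have hvImem : ∀ i, (⟨v1 i, hvI i⟩ : ↥I) = ⟨v1 i, hvI i⟩ := fun i => rfl
    choose c hc using fun i => Ideal.Quotient.mk_surjective (φ ⟨v1 i, hvI i⟩)
    have hcol : ∀ j, ∑ i, M2 i j * c i ∈ I := by
      intro j
      rw [← Ideal.Quotient.eq_zero_iff_mem]
      have h1 : Ideal.Quotient.mk I (∑ i, M2 i j * c i)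
          = ∑ i, M2 i j • φ ⟨v1 i, hvI i⟩ := by
        rw [map_sum (Ideal.Quotient.mk I) (fun i => M2 i j * c i) Finset.univ]
        exact Finset.sum_congr rfl fun i _ => by rw [hmksmul, hc i]
      have h2 : ∑ i, M2 i j • φ (⟨v1 i, hvI i⟩ : ↥I)
          = φ (∑ i, M2 i j • (⟨v1 i, hvI i⟩ : ↥I)) := by
        rw [map_sum φ (fun i => M2 i j • (⟨v1 i, hvI i⟩ : ↥I)) Finset.univ]
        exact Finset.sum_congr rfl fun i _ => (map_smul φ _ _).symm
      have h3 : (∑ i, M2 i j • (⟨v1 i, hvI i⟩ : ↥I)) = 0 := by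
        refine Subtype.ext ?_
        rw [Submodule.coe_sum]
        simpa using hzero j
      rw [h1, h2, h3, map_zero]
    refine ⟨fun j => ⟨∑ i, M2 i j * c i, hcol j⟩, ?_⟩
    apply LinearMap.ext
    intro a
    set y : Fin m → ↥I := fun j => ⟨∑ i, M2 i j * c i, hcol j⟩ with hydef
    show gval y a = φ a
    have h1 : gval y a = Ideal.Quotient.mk I (∑ i, c i * wc a i) :=
      (hZind y c (fun j => rfl) (wc a)).symm
    have ha : a = ∑ i, wc a i • (⟨v1 i, hvI i⟩ : ↥I) := by
      refine Subtype.ext ?_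
      rw [Submodule.coe_sum]
      have : ∑ i, ((wc a i • (⟨v1 i, hvI i⟩ : ↥I) : ↥I) : MvPolynomial (Fin (n + 1)) k)
          = ∑ i, wc a i * v1 i := by
        exact Finset.sum_congr rfl fun i _ => rfl
      rw [this, ← aux19_d1_apply hd1, hwc a]
    have h5 : φ a = Ideal.Quotient.mk I (∑ i, wc a i * c i) := by
      conv_lhs => rw [ha]
      rw [map_sum φ (fun i => wc a i • (⟨v1 i, hvI i⟩ : ↥I)) Finset.univ]
      have : ∀ i, φ (wc a i • (⟨v1 i, hvI i⟩ : ↥I))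
          = Ideal.Quotient.mk I (wc a i * c i) := by
        intro i
        rw [map_smul, ← hc i, ← hmksmul]
      rw [Finset.sum_congr rfl fun i _ => this i,
        ← map_sum (Ideal.Quotient.mk I) (fun i => wc a i * c i) Finset.univ]
    rw [h1, h5]
    congr 1
    exact Finset.sum_congr rfl fun i _ => mul_comm _ _
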